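/- Let k ⊆ K be fields, let L be a field extension of K, let f_1,…,f_n ∈ L, and let A be the K-subalgebra of L generated by the f_i. Let p be a prime ideal of A with residue field κ(p), and let v be a valuation on K which is trivial on k and extends to a valuation v' on κ(p) with v'(f_i mod p) ≤ 1 for all i. Then v extends to a valuation w on L which is trivial on k and satisfies w(f_i) ≤ 1 for all i. -/

import Mathlib

set_option maxHeartbeats 4000000
set_option synthInstance.maxHeartbeats 400000

/-- Let `k ⊆ K ⊆ L` be fields, `f₁, …, fₙ ∈ L`, and `A` the `K`-subalgebra of `L`
generated by the `fᵢ`. Let `p` be a prime ideal of `A` with residue field `κ(p)`, and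
let `v` be a valuation on `K`, trivial on `k`, which extends to a valuation `v'` on
`κ(p)` with `v'(fᵢ mod p) ≤ 1` for all `i`. Then `v` extends (up to equivalence) to a
valuation `w` on `L` which is trivial on `k` and satisfies `w(fᵢ) ≤ 1` for all `i`. -/
theorem stmt13.{u} (k K L : Type u) [Field k] [Field K] [Field L]
    [Algebra k K] [Algebra K L] [Algebra k L] [IsScalarTower k K L]
    (n : ℕ) (f : Fin n → L)
    (A : Subalgebra K L) (hA : A = Algebra.adjoin K (Set.range f))
    (p : Ideal A) (hp : p.IsPrime)
    (Γ : Type u) [LinearOrderedCommGroupWithZero Γ]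
    (v : Valuation K Γ)
    (htriv : ∀ a : k, a ≠ 0 → v (algebraMap k K a) = 1)
    (v' : Valuation (FractionRing (A ⧸ p)) Γ)
    (hv'ext : ∀ a : K,
      v' (algebraMap (A ⧸ p) (FractionRing (A ⧸ p))
        (Ideal.Quotient.mk p (algebraMap K A a))) = v a)
    (hv'f : ∀ i : Fin n,
      v' (algebraMap (A ⧸ p) (FractionRing (A ⧸ p))
        (Ideal.Quotient.mk p ⟨f i, hA ▸ Algebra.subset_adjoin (Set.mem_range_self i)⟩)) ≤ 1) :
    ∃ (Γ' : Type u) (_ : LinearOrderedCommGroupWithZero Γ') (w : Valuation L Γ'),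
      (w.comap (algebraMap K L)).IsEquiv v ∧
      (∀ a : k, a ≠ 0 → w (algebraMap k L a) = 1) ∧
      (∀ i : Fin n, w (f i) ≤ 1) := by
  classical
  haveI := hp
  -- the map A → κ(p)
  set ψ : A →+* FractionRing (A ⧸ p) :=
    (algebraMap (A ⧸ p) (FractionRing (A ⧸ p))).comp (Ideal.Quotient.mk p) with hψdef
  set Aₚ := Localization.AtPrime p with hAₚ
  have hψu : ∀ s : p.primeCompl, IsUnit (ψ s) := by
    rintro ⟨s, hs⟩
    refine isUnit_iff_ne_zero.mpr fun h0 => ?_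
    rw [hψdef, RingHom.comp_apply,
      map_eq_zero_iff _ (IsFractionRing.injective (A ⧸ p) (FractionRing (A ⧸ p)))] at h0
    exact hs (Ideal.Quotient.eq_zero_iff_mem.mp h0)
  set h : Aₚ →+* FractionRing (A ⧸ p) := IsLocalization.lift (M := p.primeCompl) hψu with hhdef
  have hgu : ∀ s : p.primeCompl, IsUnit (algebraMap A L s) := by
    rintro ⟨s, hs⟩
    refine isUnit_iff_ne_zero.mpr fun h0 => ?_
    rw [map_eq_zero_iff _ (Subtype.val_injective)] at h0
    have h0' : s = (0 : A) := h0
    exact hs (h0' ▸ p.zero_mem)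
  set g : Aₚ →+* L := IsLocalization.lift (M := p.primeCompl) hgu with hgdef
  have hhe : ∀ a : A, h (algebraMap A Aₚ a) = ψ a := fun a => IsLocalization.lift_eq hψu a
  have hge : ∀ a : A, g (algebraMap A Aₚ a) = (a : L) := fun a => IsLocalization.lift_eq hgu a
  -- the pullback of the valuation ring of v' in Aₚ
  set R : Subring Aₚ := (v'.integer).comap h with hRdef
  have hmemR : ∀ x : Aₚ, x ∈ R ↔ v' (h x) ≤ 1 := fun x => Iff.rfl
  -- a unit criterion in R
  have hunit : ∀ (x : Aₚ) (hx : x ∈ R), v' (h x) = 1 → IsUnit (⟨x, hx⟩ : R) := by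
    intro x hx h1
    have hx0 : h x ≠ 0 := fun e => by simp [e] at h1
    -- x is a unit in Aₚ
    obtain ⟨⟨a, s⟩, rfl⟩ := IsLocalization.mk'_surjective p.primeCompl x
    dsimp only at hx h1 hx0
    have ha : a ∈ p.primeCompl := by
      intro hap
      apply hx0
      have hψa : ψ a = 0 := by
        rw [hψdef, RingHom.comp_apply, Ideal.Quotient.eq_zero_iff_mem.mpr hap, map_zero]
      have hs' : IsLocalization.mk' Aₚ a s * algebraMap A Aₚ (s : A) = algebraMap A Aₚ a :=
        IsLocalization.mk'_spec Aₚ a s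
      have hspec := congrArg h hs'
      rw [map_mul, hhe, hhe, hψa] at hspec
      exact (hψu s).mul_left_eq_zero.mp hspec
    have hu : IsUnit (IsLocalization.mk' Aₚ a s) :=
      (IsLocalization.AtPrime.isUnit_mk'_iff Aₚ p a s).mpr ha
    obtain ⟨u, hu⟩ := hu
    have hprod : h (↑u : Aₚ) * h (↑u⁻¹ : Aₚ) = 1 := by
      rw [← map_mul, Units.mul_inv, map_one]
    have hmem : (↑u⁻¹ : Aₚ) ∈ R := by
      rw [hmemR]
      have : v' (h (↑u : Aₚ)) * v' (h (↑u⁻¹ : Aₚ)) = 1 := by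
        rw [← map_mul, hprod, map_one]
      rw [hu, h1, one_mul] at this
      rw [this]
    refine isUnit_iff_exists_inv.mpr ⟨⟨_, hmem⟩, ?_⟩
    ext
    show IsLocalization.mk' Aₚ a s * (↑u⁻¹ : Aₚ) = 1
    rw [← hu, Units.mul_inv]
  have hunit' : ∀ (x : Aₚ) (hx : x ∈ R), IsUnit (⟨x, hx⟩ : R) → v' (h x) = 1 := by
    intro x hx hu
    obtain ⟨⟨y, hy⟩, e⟩ := isUnit_iff_exists_inv.mp hu
    have e' : x * y = 1 := congrArg Subtype.val e
    have hprod : v' (h x) * v' (h y) = 1 := by rw [← map_mul, ← map_mul, e', map_one, map_one]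
    refine le_antisymm hx ?_
    by_contra hlt
    push_neg at hlt
    have hy' : v' (h y) ≤ 1 := hy
    have : v' (h x) * v' (h y) < 1 := by
      calc v' (h x) * v' (h y) ≤ v' (h x) * 1 := mul_le_mul_right hy' _
      _ = v' (h x) := mul_one _
      _ < 1 := hlt
    rw [hprod] at this
    exact absurd this (lt_irrefl 1)
  haveI : Nontrivial R := ⟨⟨0, ⟨1, by rw [hmemR, map_one, map_one]⟩, by
    intro e
    have : (0 : Aₚ) = 1 := congrArg Subtype.val e
    simp at this⟩⟩
  haveI : IsLocalRing R := by
    refine IsLocalRing.of_nonunits_add ?_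
    rintro ⟨a, haR⟩ ⟨b, hbR⟩ ha hb hab
    have ha' : v' (h a) < 1 := lt_of_le_of_ne haR fun e => ha (hunit a haR e)
    have hb' : v' (h b) < 1 := lt_of_le_of_ne hbR fun e => hb (hunit b hbR e)
    have h1 : v' (h (a + b)) = 1 := hunit' _ _ (by simpa using hab)
    have hle : v' (h (a + b)) ≤ max (v' (h a)) (v' (h b)) := by
      rw [map_add]; exact v'.map_add _ _
    rw [h1] at hle
    exact absurd (hle.trans_lt (max_lt ha' hb')) (lt_irrefl 1)
  -- Chevalley: dominate by a valuation subring of L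
  obtain ⟨B, hB, hBloc⟩ := IsLocalRing.exists_factor_valuationRing (g.comp R.subtype)
  have F1 : ∀ x : Aₚ, v' (h x) ≤ 1 → g x ∈ B := fun x hx => hB ⟨x, hx⟩
  have F2 : ∀ x : Aₚ, v' (h x) < 1 → B.valuation (g x) < 1 := by
    intro x hx
    have hxR : x ∈ R := hx.le
    have hnu : ¬ IsUnit (⟨x, hxR⟩ : R) := fun hu => absurd (hunit' x hxR hu) hx.ne
    have hnu' : ¬ IsUnit (((g.comp R.subtype).codRestrict B.toSubring hB) ⟨x, hxR⟩) :=
      fun hu => hnu (hBloc.1 _ hu)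
    have hmem : (((g.comp R.subtype).codRestrict B.toSubring hB) ⟨x, hxR⟩) ∈
        IsLocalRing.maximalIdeal B := hnu'
    exact (B.valuation_lt_one_iff _).mp hmem
  have E1 : ∀ x : K, v x ≤ 1 → algebraMap K L x ∈ B := by
    intro x hx
    have hle : v' (h (algebraMap A Aₚ (algebraMap K A x))) ≤ 1 := by
      rw [hhe]; exact (hv'ext x).le.trans hx
    have h2 := F1 _ hle
    rwa [hge, show ((algebraMap K A x : A) : L) = algebraMap K L x from rfl] at h2
  have E2 : ∀ x : K, v x < 1 → B.valuation (algebraMap K L x) < 1 := by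
    intro x hx
    have hlt : v' (h (algebraMap A Aₚ (algebraMap K A x))) < 1 := by
      rw [hhe]; exact (hv'ext x).le.trans_lt hx
    have h2 := F2 _ hlt
    rwa [hge, show ((algebraMap K A x : A) : L) = algebraMap K L x from rfl] at h2
  refine ⟨B.ValueGroup, inferInstance, B.valuation, ?_, ?_, ?_⟩
  · rw [Valuation.isEquiv_iff_val_le_one]
    intro x
    show B.valuation (algebraMap K L x) ≤ 1 ↔ v x ≤ 1
    constructor
    · intro hx
      by_contra hv1
      push_neg at hv1
      have hx0 : x ≠ 0 := by rintro rfl; simp at hv1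
      have hvinv : v x⁻¹ < 1 := by
        rw [map_inv₀]
        exact (inv_lt_one₀ (zero_lt_one.trans hv1)).mpr hv1
      have hlt := E2 _ hvinv
      rw [map_inv₀] at hlt
      have h1 : B.valuation (algebraMap K L x) * B.valuation ((algebraMap K L x)⁻¹) = 1 := by
        rw [← map_mul, mul_inv_cancel₀ ((map_ne_zero (algebraMap K L)).mpr hx0), map_one]
      have : (1:B.ValueGroup) < 1 := by
        calc (1:B.ValueGroup) = _ := h1.symm
        _ ≤ 1 * B.valuation ((algebraMap K L x)⁻¹) := mul_le_mul_left hx _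
        _ < 1 := by rw [one_mul]; exact hlt
      exact absurd this (lt_irrefl 1)
    · intro hx
      exact (B.valuation_le_one_iff _).mpr (E1 x hx)
  · -- trivial on k
    intro a ha
    have hb : v (algebraMap k K a) = 1 := htriv a ha
    have hb0 : algebraMap k K a ≠ 0 := (map_ne_zero _).mpr ha
    have hbinv : v (algebraMap k K a)⁻¹ = 1 := by
      have : v (algebraMap k K a) * v (algebraMap k K a)⁻¹ = 1 := by
        rw [← map_mul, mul_inv_cancel₀ hb0, map_one]
      rwa [hb, one_mul] at this
    have hm1 := E1 _ hb.le
    have hm2 := E1 _ hbinv.le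
    rw [map_inv₀] at hm2
    have heq : algebraMap k L a = algebraMap K L (algebraMap k K a) :=
      (IsScalarTower.algebraMap_apply k K L a)
    rw [heq]
    have hle1 : B.valuation (algebraMap K L (algebraMap k K a)) ≤ 1 :=
      (B.valuation_le_one_iff _).mpr hm1
    have hle2 : B.valuation ((algebraMap K L (algebraMap k K a))⁻¹) ≤ 1 :=
      (B.valuation_le_one_iff _).mpr hm2
    have hprod : B.valuation (algebraMap K L (algebraMap k K a)) *
        B.valuation ((algebraMap K L (algebraMap k K a))⁻¹) = 1 := by
      rw [← map_mul, mul_inv_cancel₀ ((map_ne_zero (algebraMap K L)).mpr hb0), map_one]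
    refine le_antisymm hle1 ?_
    calc (1:B.ValueGroup) = _ := hprod.symm
    _ ≤ B.valuation (algebraMap K L (algebraMap k K a)) * 1 := mul_le_mul_right hle2 _
    _ = _ := mul_one _
  · intro i
    have hmem : g (algebraMap A Aₚ
        ⟨f i, hA ▸ Algebra.subset_adjoin (Set.mem_range_self i)⟩) ∈ B := by
      apply F1
      rw [hhe]
      exact hv'f i
    rw [hge] at hmem
    exact (B.valuation_le_one_iff _).mpr hmem
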